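/- arXiv:1605.01231 — 2 statements merged into one kernel-verified Lean document; each statement's English description precedes it below -/
import Mathlib

section
/- Let G be a simple graph that is hamiltonian-connected. Then for every subset X of the vertices of G such that the graph G − X obtained by deleting the vertices of X has at least 2 connected components, the number of connected components of G − X is at most |X| − 1. Equivalently, if there exists a vertex subset X such that G − X has at least 2 connected components and the number of components of G − X is at least |X|, then G is not hamiltonian-connected. -/
open SimpleGraph

/-- A graph is hamiltonian-connected if every pair of distinct vertices is joined
by a Hamiltonian path. -/
def HamiltonianConnected {V : Type*} [DecidableEq V] (G : SimpleGraph V) : Prop :=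
  ∀ u v : V, u ≠ v → ∃ p : G.Walk u v, p.IsHamiltonian

lemma reach_seg {V : Type*} (G : SimpleGraph V) (S : Set V) (L : List V)
    (hchain : L.Chain' G.Adj) (i j : ℕ) (hij : i ≤ j) :
    ∀ (hj : j < L.length)
      (hmem : ∀ k (hk : k < L.length), i ≤ k → k ≤ j → L.get ⟨k, hk⟩ ∈ S),
      (G.induce S).Reachable ⟨L.get ⟨i, hij.trans_lt hj⟩, hmem i _ le_rfl hij⟩
        ⟨L.get ⟨j, hj⟩, hmem j hj hij le_rfl⟩ := by
  induction j, hij using Nat.le_induction with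
  | base => intro hj hmem; exact Reachable.refl _
  | succ j hij ih =>
    intro hj hmem
    have hjlt : j < L.length := Nat.lt_of_succ_lt hj
    have prev := ih hjlt (fun k hk h1 h2 => hmem k hk h1 (h2.trans (Nat.le_succ j)))
    have hadj : G.Adj (L.get ⟨j, hjlt⟩) (L.get ⟨j + 1, hj⟩) := by
      have := List.isChain_iff_getElem.mp hchain j (by omega)
      exact this
    have hadj' : (G.induce S).Adj ⟨L.get ⟨j, hjlt⟩, hmem j hjlt hij (Nat.le_succ j)⟩
        ⟨L.get ⟨j + 1, hj⟩, hmem (j+1) hj (hij.trans (Nat.le_succ j)) le_rfl⟩ := by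
      simpa using hadj
    exact prev.trans hadj'.reachable


/-- If `G` is hamiltonian-connected, then for every vertex set `X`
such that `G − X` has at least 2 connected components, the number of connected
components of `G − X` is at most `|X| − 1` (equivalently, strictly less than `|X|`). -/
theorem stmt_1 {V : Type*} [Fintype V] [DecidableEq V] (G : SimpleGraph V)
    (hG : HamiltonianConnected G) (X : Finset V)
    (hX : 2 ≤ Nat.card (G.induce ((↑X : Set V)ᶜ)).ConnectedComponent) :
    Nat.card (G.induce ((↑X : Set V)ᶜ)).ConnectedComponent ≤ X.card - 1 ∧
      Nat.card (G.induce ((↑X : Set V)ᶜ)).ConnectedComponent < X.card := by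
  classical
  set S : Set V := ((↑X : Set V)ᶜ) with hS
  by_cases hX2 : 2 ≤ X.card
  · -- main case
    obtain ⟨u, hu, v, hv, huv⟩ := Finset.one_lt_card.mp hX2
    obtain ⟨p, hp⟩ := hG u v huv
    set L := p.support with hLdef
    have hnd : L.Nodup := hp.isPath.support_nodup
    have hall : ∀ a : V, a ∈ L := fun a => hp.mem_support a
    have hchain : L.Chain' G.Adj := p.isChain_adj_support
    have hLne : L ≠ [] := p.support_ne_nil
    have hlen : 0 < L.length := List.length_pos_iff.mpr hLne
    have hL0 : L.get ⟨0, hlen⟩ = u := by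
      rw [← p.head_support]
      exact (List.get_mk_zero hlen).trans rfl
    have hLlast : L.get ⟨L.length - 1, by omega⟩ = v := by
      rw [List.get_eq_getElem, ← List.getLast_eq_getElem hLne]
      exact p.getLast_support
    -- for each component, the minimal index in L of a vertex of that component
    have hex : ∀ C : (G.induce S).ConnectedComponent, ∃ i : ℕ, ∃ (hi : i < L.length),
        ∃ (hs : L.get ⟨i, hi⟩ ∈ S),
          (G.induce S).connectedComponentMk ⟨L.get ⟨i, hi⟩, hs⟩ = C := by
      intro C
      obtain ⟨w, hw⟩ := C.exists_rep
      obtain ⟨⟨i, hi⟩, hget⟩ := List.mem_iff_get.mp (hall w.val)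
      refine ⟨i, hi, hget ▸ w.property, ?_⟩
      have : (⟨L.get ⟨i, hi⟩, hget ▸ w.property⟩ : S) = w := Subtype.ext hget
      rw [this]; exact hw
    set n : (G.induce S).ConnectedComponent → ℕ := fun C => Nat.find (hex C) with hn
    have hnspec : ∀ C, ∃ (hi : n C < L.length), ∃ (hs : L.get ⟨n C, hi⟩ ∈ S),
        (G.induce S).connectedComponentMk ⟨L.get ⟨n C, hi⟩, hs⟩ = C :=
      fun C => Nat.find_spec (hex C)
    have hnpos : ∀ C, 0 < n C := by
      intro C
      rcases Nat.eq_zero_or_pos (n C) with h | h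
      · exfalso
        obtain ⟨hi, hs, _⟩ := hnspec C
        have hgu : L.get ⟨n C, hi⟩ = u := by rw [← hL0]; congr 1; exact Fin.ext h
        rw [hgu] at hs
        exact hs (by exact_mod_cast hu)
      · exact h
    have hnlt : ∀ C, n C < L.length := fun C => (hnspec C).choose
    -- the vertex just before the minimal one
    set f : (G.induce S).ConnectedComponent → V :=
      fun C => L.get ⟨n C - 1, by have := hnlt C; omega⟩ with hf
    have hfX : ∀ C, f C ∈ X := by
      intro C
      by_contra hfx
      obtain ⟨hi, hs, hC⟩ := hnspec C
      have hs' : f C ∈ S := by simpa [hS] using hfx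
      have hadj : G.Adj (L.get ⟨n C - 1, by have := hnlt C; omega⟩) (L.get ⟨n C, hi⟩) := by
        have h1 := List.isChain_iff_getElem.mp hchain (n C - 1) (by have := hnlt C; have := hnpos C; omega)
        have heq : n C - 1 + 1 = n C := by have := hnpos C; omega
        convert h1 using 2 <;> simp [Fin.ext_iff, heq] <;> omega
      have hadj' : (G.induce S).Adj ⟨f C, hs'⟩ ⟨L.get ⟨n C, hi⟩, hs⟩ := by simpa [hf] using hadj
      have : (G.induce S).connectedComponentMk ⟨f C, hs'⟩ = C :=
        (ConnectedComponent.sound hadj'.reachable).trans hC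
      exact Nat.find_min (hex C) (show n C - 1 < n C by have := hnpos C; omega)
        ⟨by have := hnlt C; omega, hs', this⟩
    have hfv : ∀ C, f C ≠ v := by
      intro C hCv
      have : L.get ⟨n C - 1, by have := hnlt C; omega⟩
          = L.get ⟨L.length - 1, by omega⟩ := by rw [hLlast]; exact hCv
      have hidx := (hnd.get_inj_iff.mp this)
      have : n C - 1 = L.length - 1 := congrArg Fin.val hidx
      have := hnlt C; have := hnpos C; omega
    have hinj : Function.Injective f := by
      intro C C' hCC'
      have hidx := hnd.get_inj_iff.mp hCC'
      have hnn : n C = n C' := by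
        have h1 : n C - 1 = n C' - 1 := congrArg Fin.val hidx
        have := hnpos C; have := hnpos C'; omega
      obtain ⟨hi, hs, hC⟩ := hnspec C
      obtain ⟨hi', hs', hC'⟩ := hnspec C'
      have hfin : (⟨n C, hi⟩ : Fin L.length) = ⟨n C', hi'⟩ := by
        simp only [Fin.mk.injEq]; exact hnn
      rw [← hC, ← hC']
      exact congrArg _ (Subtype.ext (congrArg L.get hfin))
    have hinj' : Function.Injective
        (fun C => (⟨f C, Finset.mem_erase.mpr ⟨hfv C, hfX C⟩⟩ : {y // y ∈ X.erase v})) := by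
      intro C C' h
      exact hinj (congrArg Subtype.val h)
    have hcard := Nat.card_le_card_of_injective _ hinj'
    have : Nat.card {y // y ∈ X.erase v} = X.card - 1 := by
      rw [Nat.card_eq_fintype_card, Fintype.card_coe, Finset.card_erase_of_mem hv]
    rw [this] at hcard
    exact ⟨hcard, by omega⟩
  · -- |X| ≤ 1 : derive a contradiction with hX
    exfalso
    have hXle : X.card ≤ 1 := by omega
    have hreach : ∀ a b : S, (G.induce S).Reachable a b := by
      intro a b
      by_cases hab : a.val = b.val
      · rw [Subtype.ext hab]
      rcases Nat.le_one_iff_eq_zero_or_eq_one.mp hXle with h0 | h1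
      · -- X empty
        have hXe : X = ∅ := Finset.card_eq_zero.mp h0
        obtain ⟨p, hp⟩ := hG a.val b.val hab
        set L := p.support with hLdef
        have hall : ∀ c : V, c ∈ L := fun c => hp.mem_support c
        have hchain : L.Chain' G.Adj := p.isChain_adj_support
        obtain ⟨⟨i, hi⟩, hgi⟩ := List.mem_iff_get.mp (hall a.val)
        obtain ⟨⟨j, hj⟩, hgj⟩ := List.mem_iff_get.mp (hall b.val)
        have hmem : ∀ k (hk : k < L.length), L.get ⟨k, hk⟩ ∈ S := by
          intro k hk; simp [hS, hXe]
        rcases le_total i j with hij | hij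
        · have := reach_seg G S L hchain i j hij hj (fun k hk _ _ => hmem k hk)
          have ha : a = ⟨L.get ⟨i, hij.trans_lt hj⟩, hmem i _⟩ := Subtype.ext hgi.symm
          have hb : b = ⟨L.get ⟨j, hj⟩, hmem j hj⟩ := Subtype.ext hgj.symm
          rw [ha, hb]; exact this
        · have := reach_seg G S L hchain j i hij hi (fun k hk _ _ => hmem k hk)
          have ha : a = ⟨L.get ⟨i, hi⟩, hmem i _⟩ := Subtype.ext hgi.symm
          have hb : b = ⟨L.get ⟨j, hij.trans_lt hi⟩, hmem j _⟩ := Subtype.ext hgj.symm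
          rw [ha, hb]; exact this.symm
      · -- X = {x}
        obtain ⟨x, hXx⟩ := Finset.card_eq_one.mp h1
        have hax : a.val ≠ x := by
          have := a.property; simp [hS, hXx] at this; exact this
        have hbx : b.val ≠ x := by
          have := b.property; simp [hS, hXx] at this; exact this
        obtain ⟨p, hp⟩ := hG x b.val (Ne.symm hbx)
        set L := p.support with hLdef
        have hnd : L.Nodup := hp.isPath.support_nodup
        have hall : ∀ c : V, c ∈ L := fun c => hp.mem_support c
        have hchain : L.Chain' G.Adj := p.isChain_adj_support
        have hLne : L ≠ [] := p.support_ne_nil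
        have hlen : 0 < L.length := List.length_pos_iff.mpr hLne
        have hL0 : L.get ⟨0, hlen⟩ = x := by
          rw [← p.head_support]
          exact (List.get_mk_zero hlen).trans rfl
        obtain ⟨⟨i, hi⟩, hgi⟩ := List.mem_iff_get.mp (hall a.val)
        obtain ⟨⟨j, hj⟩, hgj⟩ := List.mem_iff_get.mp (hall b.val)
        have hi0 : i ≠ 0 := by
          intro h; apply hax; rw [← hgi, ← hL0]; congr 1; exact Fin.ext h
        have hj0 : j ≠ 0 := by
          intro h; apply hbx; rw [← hgj, ← hL0]; congr 1; exact Fin.ext h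
        have hmem : ∀ k (hk : k < L.length), k ≠ 0 → L.get ⟨k, hk⟩ ∈ S := by
          intro k hk hk0
          have : L.get ⟨k, hk⟩ ≠ x := by
            rw [← hL0]; intro h
            exact hk0 (congrArg Fin.val (hnd.get_inj_iff.mp h))
          simp only [hS, hXx]
          simpa using this
        rcases le_total i j with hij | hij
        · have hm : ∀ k (hk : k < L.length), i ≤ k → k ≤ j → L.get ⟨k, hk⟩ ∈ S :=
            fun k hk hik _ => hmem k hk (by omega)
          have := reach_seg G S L hchain i j hij hj hm
          have ha : a = ⟨L.get ⟨i, hij.trans_lt hj⟩, hm i _ le_rfl hij⟩ := Subtype.ext hgi.symm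
          have hb : b = ⟨L.get ⟨j, hj⟩, hm j hj hij le_rfl⟩ := Subtype.ext hgj.symm
          rw [ha, hb]; exact this
        · have hm : ∀ k (hk : k < L.length), j ≤ k → k ≤ i → L.get ⟨k, hk⟩ ∈ S :=
            fun k hk hjk _ => hmem k hk (by omega)
          have := reach_seg G S L hchain j i hij hi hm
          have ha : a = ⟨L.get ⟨i, hi⟩, hm i hi hij le_rfl⟩ := Subtype.ext hgi.symm
          have hb : b = ⟨L.get ⟨j, hij.trans_lt hi⟩, hm j _ le_rfl hij⟩ := Subtype.ext hgj.symm
          rw [ha, hb]; exact this.symm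
    have hsub : Subsingleton (G.induce S).ConnectedComponent := by
      constructor
      intro C C'
      obtain ⟨a, ha⟩ := C.exists_rep
      obtain ⟨b, hb⟩ := C'.exists_rep
      rw [← ha, ← hb]
      exact ConnectedComponent.sound (hreach a b)
    have : Nat.card (G.induce S).ConnectedComponent ≤ 1 := by
      haveI := hsub
      rcases isEmpty_or_nonempty (G.induce S).ConnectedComponent with h | h
      · simp
      · exact le_of_eq Nat.card_unique
    omega
end

section
/- Let G be a simple graph containing four distinct vertices u, v, w_1, w_2 such that uv, uw_1, vw_1, uw_2, vw_2 are all edges of G. Let G' be the graph obtained from G by deleting the edge uv, adding a new vertex z, and adding the edges uz, zv, zw_1, zw_2. Let x, y be distinct vertices of G with v ∉ {x, y}, and let C be a Hamiltonian cycle of the graph G' ∪ {xy} (obtained from G' by adding the edge xy if not already present) that contains the edge xy and the edge zv. Then G has a Hamiltonian path from x to y. (Indeed, C traverses a subpath ∗ z v with ∗ ∈ {w_1, w_2, u}; replacing this subpath by the edge ∗v, which is an edge of G, yields a Hamiltonian cycle C' of G ∪ {xy}, and C' − xy is a Hamiltonian path from x to y in G.) -/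
open SimpleGraph

/-- The graph `G'` obtained from `G` by deleting the edge `uv`, adding a new
vertex `z` (here `none : Option V`) and adding the edges `uz`, `zv`, `zw₁`, `zw₂`. -/
def subdivideEdge {V : Type*} (G : SimpleGraph V) (u v w₁ w₂ : V) :
    SimpleGraph (Option V) where
  Adj a b := match a, b with
    | some a, some b => G.Adj a b ∧ ¬(a = u ∧ b = v) ∧ ¬(a = v ∧ b = u)
    | some a, none => a = u ∨ a = v ∨ a = w₁ ∨ a = w₂
    | none, some b => b = u ∨ b = v ∨ b = w₁ ∨ b = w₂
    | none, none => False
  symm := by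
    constructor
    rintro (_ | a) (_ | b) h
    · exact h
    · exact h
    · exact h
    · exact ⟨h.1.symm, fun hc => h.2.2 ⟨hc.2, hc.1⟩, fun hc => h.2.1 ⟨hc.2, hc.1⟩⟩
  loopless := by
    constructor
    rintro (_ | a) h
    · exact h
    · exact G.loopless.irrefl a h.1

private lemma eq_concat_of_mem_edges {W : Type*} {H : SimpleGraph W} {a b c : W}
    (q : H.Walk a b) (hnd : q.support.Nodup) (he : s(b, c) ∈ q.edges) :
    ∃ (r : H.Walk a c) (h : H.Adj c b), q = r.concat h := by
  induction q with
  | nil => simp at he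
  | @cons a d b h' q' ih =>
    rw [Walk.support_cons, List.nodup_cons] at hnd
    rw [Walk.edges_cons, List.mem_cons] at he
    rcases he with he | he
    · rw [Sym2.eq_iff] at he
      rcases he with ⟨hb, hc⟩ | ⟨hb, hc⟩
      · exact absurd (hb ▸ q'.end_mem_support) hnd.1
      · subst hb; subst hc
        have hnil : q' = Walk.nil := (Walk.isPath_iff_eq_nil (p := q')).mp (Walk.IsPath.mk' hnd.2)
        subst hnil
        exact ⟨Walk.nil, h', rfl⟩
    · obtain ⟨r, h, rfl⟩ := ih hnd.2 he
      exact ⟨Walk.cons h' r, h, (Walk.concat_cons h' r h).symm⟩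

private lemma pull {V : Type*} {G₂ : SimpleGraph V} {H : SimpleGraph (Option V)}
    (hadj : ∀ a b : V, H.Adj (some a) (some b) → G₂.Adj a b) :
    ∀ {m n : Option V} (r : H.Walk m n) (a b : V), m = some a → n = some b →
      (none ∉ r.support) →
      ∃ p : G₂.Walk a b, p.support.map some = r.support ∧
        p.edges.map (Sym2.map some) = r.edges := by
  intro m n r
  induction r with
  | nil =>
    rintro a b rfl hb _
    obtain rfl : a = b := by injection hb
    exact ⟨Walk.nil, rfl, rfl⟩
  | @cons m k n h r' ih =>
    rintro a b rfl rfl hns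
    rw [Walk.support_cons, List.mem_cons] at hns
    push_neg at hns
    obtain ⟨c, rfl⟩ : ∃ c, k = some c := by
      cases k with
      | none => exact absurd r'.start_mem_support hns.2
      | some c => exact ⟨c, rfl⟩
    obtain ⟨p', hs, heg⟩ := ih c b rfl rfl hns.2
    exact ⟨Walk.cons (hadj _ _ h) p', by simp [hs], by simp [heg]⟩

private lemma ham_cycle_split {W : Type*} [DecidableEq W] {H : SimpleGraph W} {a b c : W}
    (C : H.Walk a a) (hC : C.IsHamiltonianCycle) (he : s(b, c) ∈ C.edges) :
    ∃ P : H.Walk c b, P.IsPath ∧ (∀ w, w ∈ P.support) ∧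
      (∀ e ∈ P.edges, e ∈ C.edges) ∧ s(b, c) ∉ P.edges ∧
      (∀ e ∈ C.edges, e = s(b, c) ∨ e ∈ P.edges) := by
  have hb : b ∈ C.support := C.fst_mem_support_of_mem_edges he
  have hcyc : (C.rotate b hb).IsCycle := hC.isCycle.rotate hb
  have hrot := C.rotate_edges b hb
  have hmemE : ∀ e, e ∈ (C.rotate b hb).edges ↔ e ∈ C.edges := fun e => hrot.mem_iff
  have hsup := C.support_rotate b hb
  have hmemV : ∀ w, w ∈ (C.rotate b hb).support.tail := by
    intro w
    rw [hsup.mem_iff]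
    have := hC.isHamiltonian_tail.mem_support w
    rwa [Walk.support_tail_of_not_nil C hC.isCycle.not_nil] at this
  have hnodupE : (C.rotate b hb).edges.Nodup := hcyc.edges_nodup
  obtain ⟨d, h, q, hq⟩ := Walk.not_nil_iff.mp hcyc.not_nil
  rw [hq] at hmemE hmemV hnodupE
  have hqnd : q.support.Nodup := by
    have := hcyc.support_nodup
    rwa [hq, Walk.support_cons, List.tail_cons] at this
  have he1 : s(b, c) ∈ (Walk.cons h q).edges := (hmemE _).mpr he
  rw [Walk.edges_cons, List.mem_cons] at he1
  simp only [Walk.support_cons, List.tail_cons] at hmemV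
  rw [Walk.edges_cons, List.nodup_cons] at hnodupE
  rcases he1 with he1 | he1
  · -- first edge is s(b,c): c = d
    have hcd : c = d := (Sym2.congr_right.mp he1)
    subst hcd
    refine ⟨q, Walk.IsPath.mk' hqnd, hmemV, ?_, ?_, ?_⟩
    · intro e heq
      exact (hmemE e).mp (by rw [Walk.edges_cons]; exact List.mem_cons_of_mem _ heq)
    · rw [he1]; exact hnodupE.1
    · intro e heC
      have : e ∈ (Walk.cons h q).edges := (hmemE e).mpr heC
      rw [Walk.edges_cons, List.mem_cons] at this
      rcases this with h1 | h1
      · exact Or.inl (h1.trans he1.symm)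
      · exact Or.inr h1
  · -- s(b,c) is the last edge of q
    obtain ⟨r, h₃, rfl⟩ := eq_concat_of_mem_edges q hqnd he1
    have hsupq : r.support ++ [b] = (r.concat h₃).support := by
      rw [Walk.support_concat]
    have hrnd : (b :: r.support).Nodup := by
      have : (r.support ++ [b]).Nodup := by rw [hsupq]; exact hqnd
      exact (List.perm_append_singleton b r.support).nodup_iff.mp this
    have hpath : (Walk.cons h r).IsPath := by
      apply Walk.IsPath.mk'
      rwa [Walk.support_cons]
    have hedq : (r.concat h₃).edges = r.edges ++ [s(c,b)] := by
      rw [Walk.edges_concat, List.concat_eq_append]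
    rw [hedq] at hnodupE
    simp only [Walk.edges_cons, hedq] at hmemE
    refine ⟨(Walk.cons h r).reverse, hpath.reverse, ?_, ?_, ?_, ?_⟩
    · intro w
      rw [Walk.support_reverse, List.mem_reverse, Walk.support_cons]
      have := hmemV w
      rw [← hsupq, List.mem_append] at this
      rcases this with h1 | h1
      · exact List.mem_cons_of_mem _ h1
      · simp only [List.mem_singleton] at h1
        rw [h1]; exact List.mem_cons_self
    · intro e heq
      rw [Walk.edges_reverse, List.mem_reverse, Walk.edges_cons, List.mem_cons] at heq
      apply (hmemE e).mp
      rw [List.mem_cons]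
      rcases heq with h1 | h1
      · exact Or.inl h1
      · exact Or.inr (List.mem_append_left _ h1)
    · rw [Walk.edges_reverse, List.mem_reverse, Walk.edges_cons, List.mem_cons]
      push_neg
      have hdisj := List.disjoint_of_nodup_append hnodupE.2
      constructor
      · intro hbc
        apply hnodupE.1
        rw [← hbc, Sym2.eq_swap]
        exact List.mem_append_right _ (List.mem_singleton_self _)
      · intro hmem
        exact hdisj hmem (by rw [Sym2.eq_swap]; exact List.mem_singleton_self _)
    · intro e heC
      have : e ∈ s(b, d) :: (r.edges ++ [s(c, b)]) := (hmemE e).mpr heC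
      rw [List.mem_cons, List.mem_append, List.mem_singleton] at this
      rcases this with h1 | h1 | h1
      · refine Or.inr ?_
        rw [Walk.edges_reverse, List.mem_reverse, Walk.edges_cons, List.mem_cons]
        exact Or.inl h1
      · refine Or.inr ?_
        rw [Walk.edges_reverse, List.mem_reverse, Walk.edges_cons, List.mem_cons]
        exact Or.inr h1
      · exact Or.inl (by rw [h1, Sym2.eq_swap])


/-- let `G'` be the subdivision of the edge `uv` of `G` by a new
vertex `z = none` joined also to `w₁` and `w₂`. Let `x, y` be distinct vertices
of `G` with `v ∉ {x, y}`, and let `C` be a Hamiltonian cycle of `G' ∪ {xy}`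
containing the edge `xy` and the edge `zv`. Then `G` has a Hamiltonian path
from `x` to `y`. -/
theorem stmt_5 {V : Type*} [DecidableEq V] (G : SimpleGraph V) (u v w₁ w₂ : V)
    (hdist : [u, v, w₁, w₂].Nodup)
    (huv : G.Adj u v) (huw₁ : G.Adj u w₁) (hvw₁ : G.Adj v w₁)
    (huw₂ : G.Adj u w₂) (hvw₂ : G.Adj v w₂)
    (x y : V) (hxy : x ≠ y) (hvx : v ≠ x) (hvy : v ≠ y)
    (a : Option V)
    (C : (subdivideEdge G u v w₁ w₂ ⊔
      fromEdgeSet {s((some x : Option V), some y)}).Walk a a)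
    (hC : C.IsHamiltonianCycle)
    (hCxy : s((some x : Option V), some y) ∈ C.edges)
    (hCzv : s((none : Option V), some v) ∈ C.edges) :
    ∃ p : G.Walk x y, p.IsHamiltonian := by
  classical
  simp only [List.nodup_cons, List.mem_cons, List.mem_singleton, List.not_mem_nil,
    or_false, not_or, List.nodup_nil, and_true] at hdist
  obtain ⟨⟨huv', huw₁', huw₂'⟩, ⟨hvw₁', hvw₂'⟩, hw₁w₂', -⟩ := hdist
  -- Phase 1: delete edge zv from C
  obtain ⟨P, hPpath, hPall, hPsub, hPnot, hPcov⟩ :=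
    ham_cycle_split C hC (show s((some v : Option V), none) ∈ C.edges by
      rw [show s((some v : Option V), none) = s((none : Option V), some v) from Sym2.eq_swap]
      exact hCzv)
  obtain ⟨m, h₂, q₂, rfl⟩ := Walk.not_nil_iff.mp (P.not_nil_of_ne (by simp))
  have hPnd := hPpath.support_nodup
  rw [Walk.support_cons, List.nodup_cons] at hPnd
  obtain ⟨hnone, hq₂nd⟩ := hPnd
  obtain ⟨s, rfl⟩ : ∃ s, m = some s := by
    cases m with
    | none => exact absurd q₂.start_mem_support hnone
    | some s => exact ⟨s, rfl⟩
  rw [sup_adj] at h₂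
  have hs : s = u ∨ s = v ∨ s = w₁ ∨ s = w₂ := by
    rcases h₂ with h₂ | h₂
    · exact h₂
    · rw [fromEdgeSet_adj] at h₂
      simp [Sym2.eq_iff] at h₂
  have hsv : s ≠ v := by
    rintro rfl
    apply hPnot
    rw [Walk.edges_cons]
    exact List.mem_cons.mpr (Or.inl Sym2.eq_swap)
  have hGsv : G.Adj s v := by
    rcases hs with rfl | rfl | rfl | rfl
    · exact huv
    · exact absurd rfl hsv
    · exact hvw₁.symm
    · exact hvw₂.symm
  have hall₂ : ∀ w, some w ∈ q₂.support := by
    intro w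
    have := hPall (some w)
    rw [Walk.support_cons, List.mem_cons] at this
    rcases this with h1 | h1
    · exact absurd h1 (by simp)
    · exact h1
  have hxy₂ : s((some x : Option V), some y) ∈ q₂.edges := by
    rcases hPcov _ hCxy with h1 | h1
    · rw [Sym2.eq_iff] at h1; simp at h1
    · rw [Walk.edges_cons, List.mem_cons] at h1
      rcases h1 with h1 | h1
      · rw [Sym2.eq_iff] at h1; simp at h1
      · exact h1
  -- pull down to V
  have hadj : ∀ a b : V, (subdivideEdge G u v w₁ w₂ ⊔
      fromEdgeSet {s((some x : Option V), some y)}).Adj (some a) (some b) →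
      (G ⊔ fromEdgeSet {s(x, y)}).Adj a b := by
    intro a b hab
    rw [sup_adj] at hab ⊢
    rcases hab with hab | hab
    · exact Or.inl hab.1
    · rw [fromEdgeSet_adj] at hab
      refine Or.inr ?_
      rw [fromEdgeSet_adj]
      refine ⟨?_, fun h => hab.2 (by rw [h])⟩
      simp only [Set.mem_singleton_iff, Sym2.eq_iff] at hab ⊢
      rcases hab.1 with ⟨h1, h2⟩ | ⟨h1, h2⟩
      · exact Or.inl ⟨by injection h1, by injection h2⟩
      · exact Or.inr ⟨by injection h1, by injection h2⟩
  obtain ⟨p, hps, hpe⟩ := pull hadj q₂ s v rfl rfl hnone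
  have hpall : ∀ w, w ∈ p.support := by
    intro w
    have := hall₂ w
    rw [← hps, List.mem_map] at this
    obtain ⟨w', hw', heq⟩ := this
    obtain rfl : w' = w := by injection heq
    exact hw'
  have hpnd : p.support.Nodup := by
    rw [← hps] at hq₂nd
    exact hq₂nd.of_map _
  have hpxy : s(x, y) ∈ p.edges := by
    have := hxy₂
    rw [← hpe, List.mem_map] at this
    obtain ⟨e, hmem, heq⟩ := this
    suffices he : e = s(x, y) by exact he ▸ hmem
    induction e using Sym2.ind with
    | _ a b =>
      rw [Sym2.map_pair_eq, Sym2.eq_iff] at heq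
      rcases heq with ⟨h1, h2⟩ | ⟨h1, h2⟩
      · rw [show a = x by injection h1, show b = y by injection h2]
      · rw [show a = y by injection h1, show b = x by injection h2, Sym2.eq_swap]
  have hpvs : s(v, s) ∉ p.edges := by
    intro hmem
    obtain ⟨r, hr, hreq⟩ := eq_concat_of_mem_edges p hpnd hmem
    have hrnd : r.support.Nodup := by
      have h1 : (r.support ++ [v]).Nodup := by
        rw [← Walk.support_concat r hr, ← hreq]
        exact hpnd
      exact h1.of_append_left
    have hrnil : r = Walk.nil := (Walk.isPath_iff_eq_nil (p := r)).mp (Walk.IsPath.mk' hrnd)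
    subst hrnil
    rw [hreq] at hpall
    have hu := hpall u
    have hw₁ := hpall w₁
    simp only [Walk.concat_nil, Walk.support_cons, Walk.support_nil, List.mem_cons,
      List.mem_singleton, List.not_mem_nil, or_false] at hu hw₁
    rcases hu with rfl | rfl
    · rcases hw₁ with rfl | rfl
      · exact huw₁' rfl
      · exact hvw₁' rfl
    · exact huv' rfl
  have hGvs : (G ⊔ fromEdgeSet {s(x, y)}).Adj v s := Or.inl hGsv.symm
  have hDpath : p.IsPath := Walk.IsPath.mk' hpnd
  have hDcyc : (Walk.cons hGvs p).IsCycle := (Walk.cons_isCycle_iff p hGvs).mpr ⟨hDpath, hpvs⟩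
  have hDham : (Walk.cons hGvs p).IsHamiltonianCycle := by
    rw [Walk.isHamiltonianCycle_iff_isCycle_and_support_count_tail_eq_one]
    refine ⟨hDcyc, fun w => ?_⟩
    rw [Walk.support_cons, List.tail_cons]
    exact List.count_eq_one_of_mem hpnd (hpall w)
  -- Phase 2: delete edge xy from D
  obtain ⟨P₂, hP₂path, hP₂all, hP₂sub, hP₂not, -⟩ :=
    ham_cycle_split (Walk.cons hGvs p) hDham
      (show s(y, x) ∈ (Walk.cons hGvs p).edges by
        rw [show s(y, x) = s(x, y) from Sym2.eq_swap, Walk.edges_cons]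
        exact List.mem_cons_of_mem _ hpxy)
  have hsubG : ∀ e ∈ P₂.edges, e ∈ G.edgeSet := by
    intro e hmem
    have heD := hP₂sub e hmem
    rw [Walk.edges_cons, List.mem_cons] at heD
    have hne : e ≠ s(x, y) := by
      intro h
      apply hP₂not
      rw [show s(y, x) = e from Sym2.eq_swap.trans h.symm]
      exact hmem
    rcases heD with h1 | h1
    · rw [h1, mem_edgeSet]; exact hGsv.symm
    · have h2 := p.edges_subset_edgeSet h1
      rw [edgeSet_sup] at h2
      rcases h2 with h2 | h2
      · exact h2
      · rw [edgeSet_fromEdgeSet] at h2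
        exact absurd (by simpa using h2.1) hne
  refine ⟨P₂.transfer G hsubG, ?_⟩
  have hsupp := P₂.support_transfer hsubG
  apply Walk.IsPath.isHamiltonian_of_mem
  · apply Walk.IsPath.mk'
    rw [hsupp]
    exact hP₂path.support_nodup
  · intro w
    rw [hsupp]
    exact hP₂all w
end
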